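/- Fix a vertex s of a graph G and let T = {t : st ∉ E, κ(s,t) ≤ k}. Let 𝓡_s be the family of inclusion-minimal members of {R_{st} : t ∈ T, |R_{st}| ≤ |R_{ts}|}. Then |𝓡_s| ≤ 2k+1. -/

import Mathlib

open Set

variable {V : Type*} [Fintype V] [DecidableEq V]

/-- The boundary (neighborhood) of a vertex set: vertices outside `A` adjacent to `A`. -/
def bdry (G : SimpleGraph V) (A : Set V) : Set V := {v | v ∉ A ∧ ∃ a ∈ A, G.Adj a v}

/-- The "node complement" `A* = V \ (A ∪ ∂A)`. -/
def nstar (G : SimpleGraph V) (A : Set V) : Set V := (A ∪ bdry G A)ᶜ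

/-- `C` is a vertex set separating `s` from `t`. -/
def IsSep (G : SimpleGraph V) (s t : V) (C : Set V) : Prop :=
  s ∉ C ∧ t ∉ C ∧ ∀ p : G.Walk s t, ∃ v ∈ C, v ∈ p.support

/-- `κ(s,t)`: minimum size of an `s`–`t` vertex cut. -/
noncomputable def kappa (G : SimpleGraph V) (s t : V) : ℕ :=
  sInf {n | ∃ C : Set V, C.ncard = n ∧ IsSep G s t C}

/-- A set is tight if `|∂A| = k` and `A* ≠ ∅`. -/
def Tight (G : SimpleGraph V) (k : ℕ) (A : Set V) : Prop :=
  (bdry G A).ncard = k ∧ (nstar G A).Nonempty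

/-- A set is small if `|A| ≤ (n - k)/2`. -/
def SmallSet (k : ℕ) (A : Set V) : Prop := 2 * A.ncard + k ≤ Fintype.card V

/-- `G` is `k`-connected. -/
def KConn (G : SimpleGraph V) (k : ℕ) : Prop :=
  k + 1 ≤ Fintype.card V ∧
    ∀ s t : V, s ≠ t → ∀ C : Set V, IsSep G s t C → k ≤ C.ncard

/-- degree of a vertex -/
noncomputable def deg (G : SimpleGraph V) (v : V) : ℕ := (G.neighborSet v).ncard

/-- `X` is an `st`-tight set: `s ∈ X`, `t ∈ X*` and `|∂X| = κ(s,t)`. -/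
def TightST (G : SimpleGraph V) (s t : V) (X : Set V) : Prop :=
  s ∈ X ∧ t ∈ nstar G X ∧ (bdry G X).ncard = kappa G s t

/-- `R_s`: intersection of all small tight sets containing `s`. -/
def Rmin (G : SimpleGraph V) (k : ℕ) (s : V) : Set V :=
  ⋂₀ {A : Set V | Tight G k A ∧ SmallSet k A ∧ s ∈ A}

/-- Two sets are laminar if disjoint or one contains the other. -/
def Laminar (X Y : Set V) : Prop := Disjoint X Y ∨ X ⊆ Y ∨ Y ⊆ X

/-- `d`-degeneracy: every nonempty vertex subset has a vertex with at most `d`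
neighbors inside it. -/
def Degenerate (G : SimpleGraph V) (d : ℕ) : Prop :=
  ∀ W : Set V, W.Nonempty → ∃ v ∈ W, (G.neighborSet v ∩ W).ncard ≤ d

/-- The set of vertices reachable from `s` avoiding `C`. -/
def Reach (G : SimpleGraph V) (C : Set V) (s : V) : Set V :=
  {v | ∃ p : G.Walk s v, ∀ u ∈ p.support, u ∉ C}

set_option linter.unusedSectionVars false

section Aux

variable {G : SimpleGraph V} {A B C X Y : Set V} {u v a b s : V}

lemma nstar_def : v ∈ nstar G A ↔ v ∉ A ∧ v ∉ bdry G A := by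
  simp [nstar, not_or]

lemma loc_trichotomy (G : SimpleGraph V) (A : Set V) (v : V) :
    v ∈ A ∨ v ∈ bdry G A ∨ v ∈ nstar G A := by
  by_cases h1 : v ∈ A
  · exact Or.inl h1
  by_cases h2 : v ∈ bdry G A
  · exact Or.inr (Or.inl h2)
  · exact Or.inr (Or.inr (nstar_def.mpr ⟨h1, h2⟩))

lemma exists_bdry_mem_support {u v : V} (p : G.Walk u v) :
    u ∈ A → v ∉ A → ∃ w ∈ bdry G A, w ∈ p.support := by
  induction p with
  | nil => intro hu hv; exact absurd hu hv
  | @cons x y z h q ih =>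
    intro hu hv
    by_cases hy : y ∈ A
    · obtain ⟨w, hw1, hw2⟩ := ih hy hv
      exact ⟨w, hw1, by simp [SimpleGraph.Walk.support_cons, hw2]⟩
    · exact ⟨y, ⟨hy, x, hu, h⟩,
        by simp [SimpleGraph.Walk.support_cons, SimpleGraph.Walk.start_mem_support]⟩

lemma isSep_bdry (hu : u ∈ A) (hv : v ∈ nstar G A) : IsSep G u v (bdry G A) :=
  ⟨fun h => h.1 hu, (nstar_def.mp hv).2,
    fun p => exists_bdry_mem_support p hu (nstar_def.mp hv).1⟩

lemma kappa_le_bdry (hu : u ∈ A) (hv : v ∈ nstar G A) :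
    kappa G u v ≤ (bdry G A).ncard :=
  Nat.sInf_le ⟨bdry G A, rfl, isSep_bdry hu hv⟩

lemma isSep_comm (h : IsSep G u v C) : IsSep G v u C := by
  obtain ⟨h1, h2, h3⟩ := h
  refine ⟨h2, h1, fun p => ?_⟩
  obtain ⟨w, hw, hws⟩ := h3 p.reverse
  exact ⟨w, hw, by simpa [SimpleGraph.Walk.support_reverse] using hws⟩

lemma kappa_comm (G : SimpleGraph V) (u v : V) : kappa G u v = kappa G v u := by
  unfold kappa
  congr 1
  ext n
  constructor <;> rintro ⟨C, h1, h2⟩ <;> exact ⟨C, h1, isSep_comm h2⟩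

lemma ncard_add_le_of_subsets {S T P Q : Set V}
    (h1 : S ⊆ P ∪ Q) (h2 : T ⊆ P ∪ Q) (h3 : S ∩ T ⊆ P ∩ Q) :
    S.ncard + T.ncard ≤ P.ncard + Q.ncard := by
  have e1 : S.ncard + T.ncard = (S ∪ T).ncard + (S ∩ T).ncard :=
    (Set.ncard_union_add_ncard_inter S T (toFinite S) (toFinite T)).symm
  have e2 : (P ∪ Q).ncard + (P ∩ Q).ncard = P.ncard + Q.ncard :=
    Set.ncard_union_add_ncard_inter P Q (toFinite P) (toFinite Q)
  calc S.ncard + T.ncard = (S ∪ T).ncard + (S ∩ T).ncard := e1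
    _ ≤ (P ∪ Q).ncard + (P ∩ Q).ncard :=
        add_le_add (Set.ncard_le_ncard (union_subset h1 h2) (toFinite _))
          (Set.ncard_le_ncard h3 (toFinite _))
    _ = P.ncard + Q.ncard := e2

lemma bdry_inter_subset : bdry G (A ∩ B) ⊆ bdry G A ∪ bdry G B := by
  rintro v ⟨hv, u, ⟨huA, huB⟩, hadj⟩
  by_cases hvA : v ∈ A
  · exact Or.inr ⟨fun hvB => hv ⟨hvA, hvB⟩, u, huB, hadj⟩
  · exact Or.inl ⟨hvA, u, huA, hadj⟩

lemma bdry_union_subset : bdry G (A ∪ B) ⊆ bdry G A ∪ bdry G B := by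
  rintro v ⟨hv, u, hu, hadj⟩
  rcases hu with hu | hu
  · exact Or.inl ⟨fun h => hv (Or.inl h), u, hu, hadj⟩
  · exact Or.inr ⟨fun h => hv (Or.inr h), u, hu, hadj⟩

lemma bdry_inter_inter_union_subset :
    bdry G (A ∩ B) ∩ bdry G (A ∪ B) ⊆ bdry G A ∩ bdry G B := by
  rintro v ⟨⟨hv1, u, ⟨huA, huB⟩, hadj⟩, hv2, -⟩
  exact ⟨⟨fun h => hv2 (Or.inl h), u, huA, hadj⟩, ⟨fun h => hv2 (Or.inr h), u, huB, hadj⟩⟩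

lemma bdry_submod (G : SimpleGraph V) (A B : Set V) :
    (bdry G (A ∩ B)).ncard + (bdry G (A ∪ B)).ncard
      ≤ (bdry G A).ncard + (bdry G B).ncard :=
  ncard_add_le_of_subsets bdry_inter_subset bdry_union_subset bdry_inter_inter_union_subset

lemma bdry_posi_subset : bdry G (A ∩ nstar G B) ⊆ bdry G A ∪ bdry G B := by
  rintro v ⟨hv, u, ⟨huA, huB⟩, hadj⟩
  by_cases hvA : v ∈ A
  · have hvB : v ∉ B := fun hvB =>
      (nstar_def.mp huB).2 ⟨(nstar_def.mp huB).1, v, hvB, hadj.symm⟩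
    rcases loc_trichotomy G B v with h | h | h
    · exact absurd h hvB
    · exact Or.inr h
    · exact absurd ⟨hvA, h⟩ hv
  · exact Or.inl ⟨hvA, u, huA, hadj⟩

lemma bdry_posi_inter_subset :
    bdry G (A ∩ nstar G B) ∩ bdry G (B ∩ nstar G A) ⊆ bdry G A ∩ bdry G B := by
  rintro v ⟨⟨hv1, u, ⟨huA, huB⟩, hadjU⟩, ⟨hv2, w, ⟨hwB, hwA⟩, hadjW⟩⟩
  have hvA : v ∉ A := fun h =>
    (nstar_def.mp hwA).2 ⟨(nstar_def.mp hwA).1, v, h, hadjW.symm⟩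
  have hvB : v ∉ B := fun h =>
    (nstar_def.mp huB).2 ⟨(nstar_def.mp huB).1, v, h, hadjU.symm⟩
  exact ⟨⟨hvA, u, huA, hadjU⟩, ⟨hvB, w, hwB, hadjW⟩⟩

lemma bdry_posimod (G : SimpleGraph V) (A B : Set V) :
    (bdry G (A ∩ nstar G B)).ncard + (bdry G (B ∩ nstar G A)).ncard
      ≤ (bdry G A).ncard + (bdry G B).ncard := by
  refine ncard_add_le_of_subsets bdry_posi_subset ?_ bdry_posi_inter_subset
  exact fun v hv => Or.symm (bdry_posi_subset hv)

lemma nstar_inter_right (hb : b ∈ nstar G B) : b ∈ nstar G (A ∩ B) :=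
  nstar_def.mpr ⟨fun h => (nstar_def.mp hb).1 h.2,
    fun ⟨_, u, hu, hadj⟩ => (nstar_def.mp hb).2 ⟨(nstar_def.mp hb).1, u, hu.2, hadj⟩⟩

lemma nstar_inter_left (hb : b ∈ nstar G A) : b ∈ nstar G (A ∩ B) :=
  nstar_def.mpr ⟨fun h => (nstar_def.mp hb).1 h.1,
    fun ⟨_, u, hu, hadj⟩ => (nstar_def.mp hb).2 ⟨(nstar_def.mp hb).1, u, hu.1, hadj⟩⟩

lemma nstar_union (ha : a ∈ nstar G A) (hb : a ∈ nstar G B) : a ∈ nstar G (A ∪ B) :=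
  nstar_def.mpr ⟨fun h => h.elim (nstar_def.mp ha).1 (nstar_def.mp hb).1,
    fun ⟨_, u, hu, hadj⟩ => hu.elim
      (fun h => (nstar_def.mp ha).2 ⟨(nstar_def.mp ha).1, u, h, hadj⟩)
      (fun h => (nstar_def.mp hb).2 ⟨(nstar_def.mp hb).1, u, h, hadj⟩)⟩

lemma mem_nstar_of_mem_base (hs : s ∈ B) : s ∈ nstar G (A ∩ nstar G B) :=
  nstar_def.mpr ⟨fun h => (nstar_def.mp h.2).1 hs,
    fun ⟨_, u, hu, hadj⟩ =>
      (nstar_def.mp hu.2).2 ⟨(nstar_def.mp hu.2).1, s, hs, hadj.symm⟩⟩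

lemma uncross_sub (hX : TightST G s a X) (hY : TightST G s b Y) (ha : a ∈ nstar G Y) :
    TightST G s b (X ∩ Y) := by
  obtain ⟨hsX, haX, hcX⟩ := hX
  obtain ⟨hsY, hbY, hcY⟩ := hY
  have hb' : b ∈ nstar G (X ∩ Y) := nstar_inter_right hbY
  have ha' : a ∈ nstar G (X ∪ Y) := nstar_union haX ha
  have h1 : kappa G s b ≤ (bdry G (X ∩ Y)).ncard := kappa_le_bdry ⟨hsX, hsY⟩ hb'
  have h2 : kappa G s a ≤ (bdry G (X ∪ Y)).ncard := kappa_le_bdry (Or.inl hsX) ha'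
  have h3 := bdry_submod G X Y
  rw [hcX, hcY] at h3
  exact ⟨⟨hsX, hsY⟩, hb', le_antisymm (by omega) h1⟩

lemma uncross_posi (hX : TightST G s a X) (hY : TightST G s b Y)
    (haY : a ∈ Y) (hbX : b ∈ X) :
    TightST G b s (X ∩ nstar G Y) ∧ TightST G a s (Y ∩ nstar G X) := by
  obtain ⟨hsX, haX, hcX⟩ := hX
  obtain ⟨hsY, hbY, hcY⟩ := hY
  have hbin : b ∈ X ∩ nstar G Y := ⟨hbX, hbY⟩
  have hain : a ∈ Y ∩ nstar G X := ⟨haY, haX⟩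
  have hs1 : s ∈ nstar G (X ∩ nstar G Y) := mem_nstar_of_mem_base hsY
  have hs2 : s ∈ nstar G (Y ∩ nstar G X) := mem_nstar_of_mem_base hsX
  have h1 : kappa G b s ≤ (bdry G (X ∩ nstar G Y)).ncard := kappa_le_bdry hbin hs1
  have h2 : kappa G a s ≤ (bdry G (Y ∩ nstar G X)).ncard := kappa_le_bdry hain hs2
  have h3 := bdry_posimod G X Y
  rw [hcX, hcY, kappa_comm G s a, kappa_comm G s b] at h3
  exact ⟨⟨hbin, hs1, le_antisymm (by omega) h1⟩, ⟨hain, hs2, le_antisymm (by omega) h2⟩⟩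

end Aux

theorem stmt16 (G : SimpleGraph V) (k : ℕ) (hk : 1 ≤ k) (s : V)
    (R : V → V → Set V)
    (hR : ∀ t : V, s ≠ t → ¬ G.Adj s t → kappa G s t ≤ k →
      (TightST G s t (R s t) ∧ ∀ X : Set V, TightST G s t X → R s t ⊆ X) ∧
      (TightST G t s (R t s) ∧ ∀ X : Set V, TightST G t s X → R t s ⊆ X)) :
    {X : Set V |
        (∃ t : V, s ≠ t ∧ ¬ G.Adj s t ∧ kappa G s t ≤ k ∧
          X = R s t ∧ (R s t).ncard ≤ (R t s).ncard) ∧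
        ∀ Y : Set V,
          (∃ t : V, s ≠ t ∧ ¬ G.Adj s t ∧ kappa G s t ≤ k ∧
            Y = R s t ∧ (R s t).ncard ≤ (R t s).ncard) → Y ⊆ X → Y = X}.ncard
      ≤ 2 * k + 1 := by
  classical
  set P : Set V → Prop := fun X =>
    ∃ t : V, s ≠ t ∧ ¬ G.Adj s t ∧ kappa G s t ≤ k ∧
      X = R s t ∧ (R s t).ncard ≤ (R t s).ncard with hPdef
  set Fam : Set (Set V) := {X | P X ∧ ∀ Y : Set V, P Y → Y ⊆ X → Y = X} with hFamdef
  show Fam.ncard ≤ 2 * k + 1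
  -- witness function
  let tw : Set V → V := fun X => if h : P X then h.choose else s
  have htw : ∀ X, P X → s ≠ tw X ∧ ¬ G.Adj s (tw X) ∧ kappa G s (tw X) ≤ k ∧
      X = R s (tw X) ∧ (R s (tw X)).ncard ≤ (R (tw X) s).ncard := by
    intro X h
    have he : tw X = h.choose := dif_pos h
    rw [he]
    exact h.choose_spec
  have tight1 : ∀ X, P X → TightST G s (tw X) X := by
    intro X h
    obtain ⟨h1, h2, h3, h4, h5⟩ := htw X h
    have := ((hR _ h1 h2 h3).1).1
    rwa [← h4] at this
  -- pair lemma
  have pair : ∀ X, X ∈ Fam → ∀ Y, Y ∈ Fam → X ≠ Y →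
      tw X ∈ bdry G Y ∨ tw Y ∈ bdry G X := by
    intro X hXF Y hYF hne
    obtain ⟨hsa, hadja, hka, hXa, hsza⟩ := htw X hXF.1
    obtain ⟨hsb, hadjb, hkb, hYb, hszb⟩ := htw Y hYF.1
    have hTX : TightST G s (tw X) X := tight1 X hXF.1
    have hTY : TightST G s (tw Y) Y := tight1 Y hYF.1
    rcases loc_trichotomy G Y (tw X) with haY | haY | haY
    · -- tw X ∈ Y : look at tw Y's location w.r.t. X
      rcases loc_trichotomy G X (tw Y) with hbX | hbX | hbX
      · -- tw Y ∈ X : posimodular uncrossing, size contradiction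
        exfalso
        obtain ⟨hT1, hT2⟩ := uncross_posi hTX hTY haY hbX
        have hsub1 : R (tw Y) s ⊆ X ∩ nstar G Y := ((hR _ hsb hadjb hkb).2).2 _ hT1
        have hsub2 : R (tw X) s ⊆ Y ∩ nstar G X := ((hR _ hsa hadja hka).2).2 _ hT2
        have c1 : (X ∩ nstar G Y).ncard < X.ncard :=
          Set.ncard_lt_ncard
            ((Set.ssubset_iff_of_subset inter_subset_left).mpr
              ⟨s, hTX.1, fun h => (nstar_def.mp h.2).1 hTY.1⟩) (toFinite X)
        have c2 : (Y ∩ nstar G X).ncard < Y.ncard :=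
          Set.ncard_lt_ncard
            ((Set.ssubset_iff_of_subset inter_subset_left).mpr
              ⟨s, hTY.1, fun h => (nstar_def.mp h.2).1 hTX.1⟩) (toFinite Y)
        have d1 : Y.ncard ≤ (R (tw Y) s).ncard := by rw [← hYb] at hszb; exact hszb
        have d2 : X.ncard ≤ (R (tw X) s).ncard := by rw [← hXa] at hsza; exact hsza
        have d3 : (R (tw Y) s).ncard ≤ (X ∩ nstar G Y).ncard :=
          Set.ncard_le_ncard hsub1 (toFinite _)
        have d4 : (R (tw X) s).ncard ≤ (Y ∩ nstar G X).ncard :=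
          Set.ncard_le_ncard hsub2 (toFinite _)
        omega
      · exact Or.inr hbX
      · -- tw Y ∈ X* : submodular uncrossing gives X ⊆ Y
        exfalso
        have hT := uncross_sub hTY hTX hbX
        have hsub : R s (tw X) ⊆ Y ∩ X := ((hR _ hsa hadja hka).1).2 _ hT
        have hXsub : X ⊆ Y := by
          rw [← hXa] at hsub; exact hsub.trans inter_subset_left
        exact hne (hYF.2 X hXF.1 hXsub)
    · exact Or.inl haY
    · -- tw X ∈ Y* : submodular uncrossing gives Y ⊆ X
      exfalso
      have hT := uncross_sub hTX hTY haY
      have hsub : R s (tw Y) ⊆ X ∩ Y := ((hR _ hsb hadjb hkb).1).2 _ hT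
      have hYsub : Y ⊆ X := by
        rw [← hYb] at hsub; exact hsub.trans inter_subset_left
      exact hne (hXF.2 Y hYF.1 hYsub).symm
  -- injectivity of witnesses
  have inj : ∀ X, P X → ∀ Y, P Y → tw X = tw Y → X = Y := by
    intro X hX Y hY h
    rw [(htw X hX).2.2.2.1, (htw Y hY).2.2.2.1, h]
  -- boundary bound
  have kbd : ∀ X, P X → (bdry G X).ncard ≤ k := by
    intro X hX
    have := (tight1 X hX).2.2
    rw [this]
    exact (htw X hX).2.2.1
  -- counting
  have hfin : Fam.Finite := Set.toFinite _
  have hcard : Fam.ncard = hfin.toFinset.card := Set.ncard_eq_toFinset_card _ hfin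
  rw [hcard]
  set F : Finset (Set V) := hfin.toFinset with hFdef
  have hmemF : ∀ X, X ∈ F ↔ X ∈ Fam := fun X => hfin.mem_toFinset
  set D : Finset (Set V × Set V) :=
    F.offDiag.filter (fun p => tw p.1 ∈ bdry G p.2) with hDdef
  have hD1 : F.offDiag.card ≤ 2 * D.card := by
    have hsubD : F.offDiag ⊆ D ∪ D.image Prod.swap := by
      intro p hp
      obtain ⟨hp1, hp2, hp3⟩ := Finset.mem_offDiag.mp hp
      rcases pair p.1 ((hmemF _).mp hp1) p.2 ((hmemF _).mp hp2) hp3 with h | h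
      · exact Finset.mem_union_left _ (Finset.mem_filter.mpr ⟨hp, h⟩)
      · refine Finset.mem_union_right _ (Finset.mem_image.mpr ⟨(p.2, p.1), ?_, rfl⟩)
        exact Finset.mem_filter.mpr
          ⟨Finset.mem_offDiag.mpr ⟨hp2, hp1, Ne.symm hp3⟩, h⟩
    calc F.offDiag.card ≤ (D ∪ D.image Prod.swap).card := Finset.card_le_card hsubD
      _ ≤ D.card + (D.image Prod.swap).card := Finset.card_union_le _ _
      _ ≤ D.card + D.card := by
          exact Nat.add_le_add_left (Finset.card_image_le) _
      _ = 2 * D.card := by ring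
  have hD2 : D.card ≤ F.card * k := by
    have hfiber : ∀ p ∈ D, p.2 ∈ F := by
      intro p hp
      exact (Finset.mem_offDiag.mp (Finset.mem_filter.mp hp).1).2.1
    rw [Finset.card_eq_sum_card_fiberwise hfiber]
    have hbound : ∀ Y ∈ F, (D.filter (fun p => p.2 = Y)).card ≤ k := by
      intro Y hY
      have hYFam : Y ∈ Fam := (hmemF _).mp hY
      have hbf : ((toFinite (bdry G Y)).toFinset).card = (bdry G Y).ncard :=
        (Set.ncard_eq_toFinset_card _ _).symm
      refine le_trans (Finset.card_le_card_of_injOn (fun p => tw p.1) ?_ ?_)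
        (le_trans (le_of_eq hbf) (kbd Y hYFam.1))
      · intro p hp
        obtain ⟨hpD, hpY⟩ := Finset.mem_filter.mp hp
        have := (Finset.mem_filter.mp hpD).2
        rw [hpY] at this
        exact (Set.Finite.mem_toFinset _).mpr this
      · intro p hp q hq heq
        obtain ⟨hpD, hpY⟩ := Finset.mem_filter.mp hp
        obtain ⟨hqD, hqY⟩ := Finset.mem_filter.mp hq
        have hp1 : p.1 ∈ Fam :=
          (hmemF _).mp (Finset.mem_offDiag.mp (Finset.mem_filter.mp hpD).1).1
        have hq1 : q.1 ∈ Fam :=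
          (hmemF _).mp (Finset.mem_offDiag.mp (Finset.mem_filter.mp hqD).1).1
        exact Prod.ext (inj _ hp1.1 _ hq1.1 heq) (hpY.trans hqY.symm)
    calc (∑ Y ∈ F, (D.filter (fun p => p.2 = Y)).card) ≤ ∑ _Y ∈ F, k :=
        Finset.sum_le_sum hbound
      _ = F.card * k := by rw [Finset.sum_const, smul_eq_mul]
  -- arithmetic
  have hoff : F.offDiag.card = F.card * F.card - F.card := F.offDiag_card
  have key : F.card * F.card - F.card ≤ 2 * (F.card * k) := by
    calc F.card * F.card - F.card = F.offDiag.card := hoff.symm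
      _ ≤ 2 * D.card := hD1
      _ ≤ 2 * (F.card * k) := by omega
  rcases Nat.eq_zero_or_pos F.card with hm | hm
  · omega
  · have e1 : F.card * F.card - F.card = F.card * (F.card - 1) := by
      rw [Nat.mul_sub, mul_one]
    have e2 : 2 * (F.card * k) = F.card * (2 * k) := by ring
    rw [e1, e2] at key
    have := Nat.le_of_mul_le_mul_left key hm
    omega
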